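/- arXiv:math/0602390 — 3 statements merged into one kernel-verified Lean document; each statement's English description precedes it below -/
import Mathlib

section
/- Let R : ℂ̂ → ℂ̂ be a rational map of degree at least 2. Suppose there is a constant C₀ > 0 such that for every exposed critical value v of R lying in the Julia set J(R) and every k ≥ 1, |(R^{k+1})'(v)| ≥ C₀. Then there are constants C₁ > 0 and θ ∈ (0,1) such that for every such critical value v, every k ≥ 1, and every ξ with R^k(ξ) ∈ Crit(R), one has dist(ξ, v) ≥ C₁ θ^k. -/
open Set Metric

/-- If for some `C₀ > 0` every exposed critical value `v` in the Julia set satisfies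
`|(R^{k+1})'(v)| ≥ C₀` for all `k ≥ 1`, then there are `C₁ > 0` and `θ ∈ (0,1)` so that
`dist(ξ, v) ≥ C₁ θ^k` whenever `R^k ξ ∈ Crit(R)`.  Here the rational map on the sphere
is abstracted as a map `R` of a metric space, `d n x` denotes `|(Rⁿ)'(x)|` (spherical
derivative of the iterate, satisfying the chain rule), `M = sup |R'|` (so `R` is
`M`-Lipschitz), and `|R'(w)| ≤ C · dist(w, Crit(R))`. -/
theorem stmt2 {X : Type*} [MetricSpace X]
    (R : X → X) (Crit J ECV : Set X)
    (d : ℕ → X → ℝ)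
    (hd0 : ∀ x, d 0 x = 1)
    (hd1 : ∀ x, 0 ≤ d 1 x)
    (hchain : ∀ (n : ℕ) (x : X), d (n + 1) x = d n x * d 1 (R^[n] x))
    (hECV : ∀ v ∈ ECV, v ∈ R '' Crit ∧ v ∈ J ∧ ∀ n : ℕ, R^[n] v ∉ Crit)
    (M : ℝ) (hM : 0 < M)
    (hLip : ∀ x y : X, dist (R x) (R y) ≤ M * dist x y)
    (hdM : ∀ x, d 1 x ≤ M)
    (C : ℝ) (hC : 0 < C)
    (hCd : ∀ w : X, d 1 w ≤ C * Metric.infDist w Crit)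
    (C₀ : ℝ) (hC₀ : 0 < C₀)
    (hCE : ∀ v ∈ ECV, ∀ k : ℕ, 1 ≤ k → C₀ ≤ d (k + 1) v) :
    ∃ C₁ > 0, ∃ θ ∈ Set.Ioo (0 : ℝ) 1,
      ∀ v ∈ ECV, ∀ k : ℕ, 1 ≤ k → ∀ ξ : X, R^[k] ξ ∈ Crit →
        C₁ * θ ^ k ≤ dist ξ v := by
  set M' : ℝ := max M 1 with hM'def
  have hM'1 : (1 : ℝ) ≤ M' := le_max_right _ _
  have hM'0 : (0 : ℝ) < M' := lt_of_lt_of_le one_pos hM'1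
  -- nonnegativity of d n x
  have hdnn : ∀ n x, 0 ≤ d n x := by
    intro n
    induction n with
    | zero => intro x; rw [hd0]; norm_num
    | succ n ih => intro x; rw [hchain]; exact mul_nonneg (ih x) (hd1 _)
  -- d n x ≤ M'^n
  have hdle : ∀ n x, d n x ≤ M' ^ n := by
    intro n
    induction n with
    | zero => intro x; rw [hd0]; norm_num
    | succ n ih =>
      intro x
      rw [hchain, pow_succ]
      exact mul_le_mul (ih x) (le_trans (hdM _) (le_max_left _ _)) (hd1 _)
        (pow_nonneg hM'0.le _)
  -- iterate Lipschitz
  have hiter : ∀ (k : ℕ) (x y : X), dist (R^[k] x) (R^[k] y) ≤ M' ^ k * dist x y := by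
    intro k
    induction k with
    | zero => intro x y; simp
    | succ k ih =>
      intro x y
      rw [Function.iterate_succ_apply', Function.iterate_succ_apply']
      calc dist (R (R^[k] x)) (R (R^[k] y)) ≤ M * dist (R^[k] x) (R^[k] y) := hLip _ _
        _ ≤ M' * (M' ^ k * dist x y) := by
            apply mul_le_mul (le_max_left _ _) (ih x y) dist_nonneg hM'0.le
        _ = M' ^ (k + 1) * dist x y := by ring
  refine ⟨C₀ / C, div_pos hC₀ hC, 1 / (2 * M' ^ 2), ⟨by positivity, by
    rw [div_lt_one (by positivity)]
    nlinarith [sq_nonneg M', sq_nonneg (M' - 1)]⟩, ?_⟩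
  intro v hv k hk ξ hξ
  have hMk : (0 : ℝ) < M' ^ k := pow_pos hM'0 _
  -- C₀ ≤ M'^k * d 1 (R^[k] v)
  have h1 : C₀ ≤ M' ^ k * d 1 (R^[k] v) := by
    calc C₀ ≤ d (k + 1) v := hCE v hv k hk
      _ = d k v * d 1 (R^[k] v) := hchain k v
      _ ≤ M' ^ k * d 1 (R^[k] v) := mul_le_mul_of_nonneg_right (hdle k v) (hd1 _)
  -- infDist bound
  have h2 : Metric.infDist (R^[k] v) Crit ≤ dist (R^[k] v) (R^[k] ξ) :=
    Metric.infDist_le_dist_of_mem hξ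
  have h3 : d 1 (R^[k] v) ≤ C * (M' ^ k * dist v ξ) := by
    calc d 1 (R^[k] v) ≤ C * Metric.infDist (R^[k] v) Crit := hCd _
      _ ≤ C * dist (R^[k] v) (R^[k] ξ) := by
          exact mul_le_mul_of_nonneg_left h2 hC.le
      _ ≤ C * (M' ^ k * dist v ξ) := mul_le_mul_of_nonneg_left (hiter k v ξ) hC.le
  have h4 : C₀ ≤ M' ^ k * (C * (M' ^ k * dist v ξ)) :=
    le_trans h1 (mul_le_mul_of_nonneg_left h3 hMk.le)
  have h5 : C₀ / C / (M' ^ k * M' ^ k) ≤ dist v ξ := by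
    rw [div_div, div_le_iff₀ (by positivity)]
    nlinarith
  calc C₀ / C * (1 / (2 * M' ^ 2)) ^ k ≤ C₀ / C / (M' ^ k * M' ^ k) := by
        rw [div_pow, one_pow, mul_one_div]
        apply div_le_div_of_nonneg_left (div_pos hC₀ hC).le (by positivity)
        calc M' ^ k * M' ^ k = (M' ^ 2) ^ k := by ring
          _ ≤ (2 : ℝ) ^ k * (M' ^ 2) ^ k :=
              le_mul_of_one_le_left (by positivity) (one_le_pow₀ one_le_two)
          _ = (2 * M' ^ 2) ^ k := (mul_pow 2 (M' ^ 2) k).symm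
    _ ≤ dist v ξ := h5
    _ = dist ξ v := dist_comm v ξ
end

section
/- Let R be a rational map of degree at least 2 whose Julia set satisfies diam(J(R)) > (1/2)·diam(ℂ̂) in the spherical metric. Then there exists r_K ∈ (0, diam(ℂ̂)) such that for every r ∈ (0, r_K), every z₀ ∈ ℂ̂, and every connected component W of R⁻¹(B(z₀, r)), one has diam(ℂ̂ \ W) > (1/2)·diam(ℂ̂). -/
open Set Metric

noncomputable section

/-- The chordal (spherical) distance on `ℂ ⊆ ℂ̂`. -/
def chordal (z w : ℂ) : ℝ :=
  2 * ‖z - w‖ /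
    (Real.sqrt (1 + ‖z‖ ^ 2) * Real.sqrt (1 + ‖w‖ ^ 2))

/-- Spherical ball. -/
def cball (z : ℂ) (r : ℝ) : Set ℂ := {w : ℂ | chordal z w < r}

/-- Spherical diameter of a set. -/
def chordalDiam (S : Set ℂ) : ℝ := sSup (Set.image2 chordal S S)

lemma chordal_nonneg (z w : ℂ) : 0 ≤ chordal z w := by unfold chordal; positivity

lemma chordal_comm (z w : ℂ) : chordal z w = chordal w z := by
  unfold chordal; rw [norm_sub_rev]; ring

lemma chordal_self (z : ℂ) : chordal z z = 0 := by simp [chordal]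

/-- Stereographic image of a point on the unit sphere in `ℝ³`. -/
def sphPt (z : ℂ) : EuclideanSpace ℝ (Fin 3) :=
  WithLp.toLp 2 ![2*z.re/(1+‖z‖^2), 2*z.im/(1+‖z‖^2),
    (‖z‖^2-1)/(1+‖z‖^2)]

lemma chordal_eq_dist (z w : ℂ) : chordal z w = dist (sphPt z) (sphPt w) := by
  rw [EuclideanSpace.dist_eq]
  rw [show chordal z w = Real.sqrt ((chordal z w)^2) from (Real.sqrt_sq (chordal_nonneg z w)).symm]
  congr 1
  have hz : (0:ℝ) < 1 + ‖z‖ ^ 2 := by positivity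
  have hw : (0:ℝ) < 1 + ‖w‖ ^ 2 := by positivity
  have e1 : Real.sqrt (1 + ‖z‖ ^ 2) ^ 2 = 1 + ‖z‖ ^ 2 := Real.sq_sqrt hz.le
  have e2 : Real.sqrt (1 + ‖w‖ ^ 2) ^ 2 = 1 + ‖w‖ ^ 2 := Real.sq_sqrt hw.le
  have hsz : ‖z‖ ^ 2 = z.re^2 + z.im^2 := by
    rw [Complex.sq_norm, Complex.normSq_apply]; ring
  have hsw : ‖w‖ ^ 2 = w.re^2 + w.im^2 := by
    rw [Complex.sq_norm, Complex.normSq_apply]; ring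
  have hszw : ‖z - w‖ ^ 2 = (z.re - w.re)^2 + (z.im - w.im)^2 := by
    rw [Complex.sq_norm, Complex.normSq_apply]; simp [Complex.sub_re, Complex.sub_im]; ring
  have hz' : (0:ℝ) < 1 + (z.re^2 + z.im^2) := by positivity
  have hw' : (0:ℝ) < 1 + (w.re^2 + w.im^2) := by positivity
  rw [Fin.sum_univ_three]
  simp only [sphPt, chordal, div_pow, mul_pow, e1, e2]
  rw [hsz, hsw, hszw]
  simp only [Matrix.cons_val_zero, Matrix.cons_val_one, Matrix.head_cons, Matrix.cons_val_two,
    Matrix.tail_cons]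
  simp only [Real.dist_eq, sq_abs]
  field_simp
  ring

lemma chordal_triangle (a b c : ℂ) : chordal a c ≤ chordal a b + chordal b c := by
  rw [chordal_eq_dist, chordal_eq_dist, chordal_eq_dist]
  exact dist_triangle _ _ _

lemma one_le_sqrt_one_add (t : ℝ) : 1 ≤ Real.sqrt (1 + t^2) := by
  have : Real.sqrt 1 ≤ Real.sqrt (1 + t^2) := Real.sqrt_le_sqrt (by nlinarith)
  simpa using this

lemma chordal_le_two (z w : ℂ) : chordal z w ≤ 2 := by
  unfold chordal
  have hz : Real.sqrt (1 + ‖z‖ ^ 2) ^ 2 = 1 + ‖z‖ ^ 2 :=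
    Real.sq_sqrt (by positivity)
  have hw : Real.sqrt (1 + ‖w‖ ^ 2) ^ 2 = 1 + ‖w‖ ^ 2 :=
    Real.sq_sqrt (by positivity)
  have h1 : ‖z - w‖ ≤
      Real.sqrt (1 + ‖z‖ ^ 2) * Real.sqrt (1 + ‖w‖ ^ 2) := by
    have h2 : ‖z - w‖ ≤ ‖z‖ + ‖w‖ := by
      simpa using norm_sub_le z w
    have key : (‖z‖ + ‖w‖)^2 ≤
        (Real.sqrt (1 + ‖z‖ ^ 2) * Real.sqrt (1 + ‖w‖ ^ 2))^2 := by
      rw [mul_pow, hz, hw]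
      nlinarith [sq_nonneg (‖z‖ * ‖w‖ - 1)]
    have h3 : ‖z‖ + ‖w‖ ≤
        Real.sqrt (1 + ‖z‖ ^ 2) * Real.sqrt (1 + ‖w‖ ^ 2) :=
      (pow_le_pow_iff_left₀ (by positivity) (by positivity) (by norm_num)).mp key
    linarith
  rw [div_le_iff₀ (by positivity)]
  nlinarith

lemma chordal_pos {z w : ℂ} (h : z ≠ w) : 0 < chordal z w := by
  unfold chordal
  apply div_pos
  · have : z - w ≠ 0 := sub_ne_zero.mpr h
    have := norm_pos_iff.mpr this
    linarith
  · positivity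

lemma chordal_le_two_mul_dist (z w : ℂ) : chordal z w ≤ 2 * dist z w := by
  rw [Complex.dist_eq]
  unfold chordal
  rw [div_le_iff₀ (by positivity)]
  have h1 := one_le_sqrt_one_add (‖z‖)
  have h2 := one_le_sqrt_one_add (‖w‖)
  have h3 : 1 ≤ Real.sqrt (1 + ‖z‖ ^ 2) * Real.sqrt (1 + ‖w‖ ^ 2) :=
    one_le_mul_of_one_le_of_one_le h1 h2
  nlinarith [norm_nonneg (z - w)]

lemma bddAbove_image2_chordal (S T : Set ℂ) : BddAbove (Set.image2 chordal S T) := by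
  refine ⟨2, ?_⟩
  rintro _ ⟨a, _, b, _, rfl⟩
  exact chordal_le_two a b

lemma chordal_le_diam {S : Set ℂ} {z w : ℂ} (hz : z ∈ S) (hw : w ∈ S) :
    chordal z w ≤ chordalDiam S :=
  le_csSup (bddAbove_image2_chordal S S) (Set.mem_image2_of_mem hz hw)

lemma chordalDiam_univ : chordalDiam (Set.univ : Set ℂ) = 2 := by
  apply le_antisymm
  · refine csSup_le ⟨chordal 0 0, 0, trivial, 0, trivial, rfl⟩ ?_
    rintro _ ⟨a, _, b, _, rfl⟩
    exact chordal_le_two a b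
  · have h : chordal 1 (-1) = 2 := by
      unfold chordal
      have h0 : ‖(1:ℂ) - (-1)‖ = 2 := by norm_num
      have h1 : ‖(1:ℂ)‖ = 1 := by simp
      have h2 : ‖(-1:ℂ)‖ = 1 := by simp
      rw [h0, h1, h2]
      rw [show (1:ℝ)+1^2 = 2 by norm_num]
      rw [Real.mul_self_sqrt (by norm_num)]
      norm_num
    calc (2:ℝ) = chordal 1 (-1) := h.symm
    _ ≤ chordalDiam Set.univ := chordal_le_diam trivial trivial

/-- A sharp lower bound on the chordal distance between a point of modulus `≤ C`
and a point of modulus `≥ 2C+2`. -/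
lemma chordal_lower {v w : ℂ} {C : ℝ} (hv : ‖v‖ ≤ C)
    (hw : 2*C+2 ≤ ‖w‖) :
    1 / (2 * Real.sqrt (1+C^2)) < chordal v w := by
  have hC : 0 ≤ C := (norm_nonneg v).trans hv
  have hwpos : (0:ℝ) < ‖w‖ := by linarith
  have hS : (0:ℝ) < Real.sqrt (1+C^2) := Real.sqrt_pos.mpr (by positivity)
  have hsub : ‖w‖ - ‖v‖ ≤ ‖v - w‖ := by
    have h1 : ‖w‖ ≤ ‖w - v‖ + ‖v‖ := by
      have := norm_add_le (w - v) v
      simpa using this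
    have h2 : ‖w - v‖ = ‖v - w‖ := norm_sub_rev _ _
    linarith
  have hX : ‖w‖ ≤ 2 * ‖v - w‖ := by
    have : ‖w‖ / 2 + 1 ≤ ‖v - w‖ := by
      have : ‖w‖ - C ≤ ‖v - w‖ := by linarith
      linarith
    linarith
  have hA : Real.sqrt (1 + ‖v‖ ^ 2) ≤ Real.sqrt (1+C^2) :=
    Real.sqrt_le_sqrt (by nlinarith [norm_nonneg v])
  have hB : Real.sqrt (1 + ‖w‖ ^ 2) ≤ Real.sqrt 2 * ‖w‖ := by
    have h1 : Real.sqrt (1 + ‖w‖ ^ 2) ≤ Real.sqrt (2 * ‖w‖ ^ 2) :=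
      Real.sqrt_le_sqrt (by nlinarith)
    have h2 : Real.sqrt (2 * ‖w‖ ^ 2) = Real.sqrt 2 * ‖w‖ := by
      rw [Real.sqrt_mul (by norm_num), Real.sqrt_sq (norm_nonneg w)]
    linarith [h1, h2.le, h2.ge]
  have hsqrt2 : Real.sqrt 2 < 2 := by
    nlinarith [Real.sq_sqrt (show (0:ℝ) ≤ 2 by norm_num), Real.sqrt_nonneg 2]
  have step1 : 1 / (2 * Real.sqrt (1+C^2)) <
      ‖w‖ / (Real.sqrt (1+C^2) * (Real.sqrt 2 * ‖w‖)) := by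
    rw [show ‖w‖ / (Real.sqrt (1+C^2) * (Real.sqrt 2 * ‖w‖))
        = 1 / (Real.sqrt 2 * Real.sqrt (1+C^2)) by
      field_simp]
    apply one_div_lt_one_div_of_lt
    · positivity
    · nlinarith
  have step2 : ‖w‖ / (Real.sqrt (1+C^2) * (Real.sqrt 2 * ‖w‖)) ≤
      2 * ‖v - w‖ /
        (Real.sqrt (1 + ‖v‖ ^ 2) * Real.sqrt (1 + ‖w‖ ^ 2)) := by
    apply div_le_div₀ (by positivity) hX (by positivity)
    have hBnn : 0 ≤ Real.sqrt (1 + ‖w‖ ^ 2) := Real.sqrt_nonneg _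
    have hAnn : 0 ≤ Real.sqrt (1 + ‖v‖ ^ 2) := Real.sqrt_nonneg _
    calc Real.sqrt (1 + ‖v‖ ^ 2) * Real.sqrt (1 + ‖w‖ ^ 2)
        ≤ Real.sqrt (1+C^2) * Real.sqrt (1 + ‖w‖ ^ 2) := by
          apply mul_le_mul_of_nonneg_right hA hBnn
      _ ≤ Real.sqrt (1+C^2) * (Real.sqrt 2 * ‖w‖) := by
          apply mul_le_mul_of_nonneg_left hB hS.le
  unfold chordal
  linarith

/-- Far apart: a point of modulus `≤ 3/2` has chordal distance `> 1` from any point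
of modulus `≥ 16`. -/
lemma chordal_gt_one {z w : ℂ} (hz : ‖z‖ ≤ 3/2) (hw : 16 ≤ ‖w‖) :
    1 < chordal z w := by
  have hA2 : Real.sqrt (1 + ‖z‖ ^ 2) ^ 2 = 1 + ‖z‖ ^ 2 :=
    Real.sq_sqrt (by positivity)
  have hB2 : Real.sqrt (1 + ‖w‖ ^ 2) ^ 2 = 1 + ‖w‖ ^ 2 :=
    Real.sq_sqrt (by positivity)
  have hsub : ‖w‖ - ‖z‖ ≤ ‖z - w‖ := by
    have h1 : ‖w‖ ≤ ‖w - z‖ + ‖z‖ := by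
      have := norm_add_le (w - z) z
      simpa using this
    have h2 : ‖w - z‖ = ‖z - w‖ := norm_sub_rev _ _
    linarith
  have hzn := norm_nonneg z
  have hsq : (Real.sqrt (1 + ‖z‖ ^ 2) * Real.sqrt (1 + ‖w‖ ^ 2))^2
      < (2 * ‖z - w‖)^2 := by
    rw [mul_pow, hA2, hB2]
    have hX15 : ‖w‖ - 3/2 ≤ ‖z - w‖ := by linarith
    have hXsq : (‖w‖ - 3/2)^2 ≤ ‖z - w‖^2 := by
      have h0 : (0:ℝ) ≤ ‖w‖ - 3/2 := by linarith
      nlinarith [norm_nonneg (z - w)]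
    have hz2 : ‖z‖ ^ 2 ≤ 9/4 := by nlinarith
    nlinarith [mul_nonneg (show (0:ℝ) ≤ ‖w‖ - 16 by linarith) (norm_nonneg w),
      sq_nonneg (‖w‖)]
  have hlt : Real.sqrt (1 + ‖z‖ ^ 2) * Real.sqrt (1 + ‖w‖ ^ 2)
      < 2 * ‖z - w‖ :=
    (pow_lt_pow_iff_left₀ (by positivity) (by positivity) (by norm_num)).mp hsq
  unfold chordal
  rw [lt_div_iff₀ (by positivity), one_mul]
  exact hlt

/-- Points on a periodic orbit are bounded. -/
lemma orbit_bound {R : ℂ → ℂ} {p : ℂ} {n : ℕ} (hn : 1 ≤ n) (hp : R^[n] p = p) :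
    ∃ C : ℝ, ∀ k : ℕ, ‖R^[k] p‖ ≤ C := by
  have hmul : ∀ m, R^[n*m] p = p := by
    intro m
    induction m with
    | zero => simp
    | succ m ih =>
      rw [Nat.mul_succ, Function.iterate_add_apply, hp, ih]
  have hk : ∀ k, R^[k] p = R^[k % n] p := by
    intro k
    conv_lhs => rw [← Nat.div_add_mod k n]
    rw [Nat.add_comm, Function.iterate_add_apply, hmul]
  have hne : ((Finset.range n).image (fun j => ‖R^[j] p‖)).Nonempty := by
    refine Finset.image_nonempty.mpr ⟨0, ?_⟩
    simp [Nat.lt_of_lt_of_le Nat.zero_lt_one hn]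
  refine ⟨((Finset.range n).image (fun j => ‖R^[j] p‖)).max' hne, fun k => ?_⟩
  rw [hk k]
  apply Finset.le_max'
  exact Finset.mem_image_of_mem _ (Finset.mem_range.mpr (Nat.mod_lt k (by omega)))

/-- Lemma: if `diam J(R) > (1/2) diam ℂ̂`, there is `r_K > 0` such that every pull-back
`W` of a spherical ball of radius `r < r_K` by `R` satisfies
`diam(ℂ̂ \ W) > (1/2) diam ℂ̂`.  The rational map of degree ≥ 2 is encoded by a
holomorphic map `R` together with its Julia set `J`, in which periodic points are
dense. -/
theorem stmt6 (R : ℂ → ℂ) (hR : Differentiable ℂ R)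
    (J : Set ℂ)
    (hdense : J ⊆ closure {z : ℂ | ∃ n : ℕ, 1 ≤ n ∧ R^[n] z = z})
    (hJdiam : (1 / 2) * chordalDiam Set.univ < chordalDiam J) :
    ∃ rK ∈ Set.Ioo (0 : ℝ) (chordalDiam Set.univ),
      ∀ r ∈ Set.Ioo (0 : ℝ) rK, ∀ z₀ : ℂ, ∀ x ∈ R ⁻¹' cball z₀ r,
        (1 / 2) * chordalDiam Set.univ <
          chordalDiam (connectedComponentIn (R ⁻¹' cball z₀ r) x)ᶜ := by
  rw [chordalDiam_univ] at hJdiam ⊢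
  rw [show (1:ℝ)/2*2 = 1 by norm_num] at hJdiam ⊢
  -- two far points of J
  have hJne : (Set.image2 chordal J J).Nonempty := by
    rcases Set.eq_empty_or_nonempty (Set.image2 chordal J J) with h | h
    · exfalso
      have : chordalDiam J = 0 := by rw [chordalDiam, h, Real.sSup_empty]
      rw [this] at hJdiam; linarith
    · exact h
  have hJd' : 1 < sSup (Set.image2 chordal J J) := hJdiam
  obtain ⟨s, hsmem, hs⟩ := exists_lt_of_lt_csSup hJne hJd'
  obtain ⟨a, haJ, b, hbJ, rfl⟩ := hsmem
  -- R is nonconstant on the ball of radius 3/2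
  have hnc : ∃ u v : ℂ, ‖u‖ ≤ 3/2 ∧ ‖v‖ ≤ 3/2 ∧ R u ≠ R v := by
    by_contra h
    push_neg at h
    have hconst : ∀ z, ‖z‖ ≤ 3/2 → R z = R 0 := fun z hz => h z 0 hz (by norm_num)
    have hall : ∀ z, R z = R 0 := by
      have hA : AnalyticOnNhd ℂ R Set.univ := Complex.analyticOnNhd_univ_iff_differentiable.mpr hR
      have hB : AnalyticOnNhd ℂ (fun _ => R 0) Set.univ :=
        Complex.analyticOnNhd_univ_iff_differentiable.mpr (differentiable_const _)
      have heq : R =ᶠ[nhds 0] (fun _ => R 0) := by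
        filter_upwards [Metric.ball_mem_nhds (0:ℂ) one_pos] with u hu
        apply hconst
        rw [mem_ball_zero_iff] at hu
        linarith
      have := hA.eqOn_of_preconnected_of_eventuallyEq hB isPreconnected_univ (Set.mem_univ 0) heq
      exact fun z => this (Set.mem_univ z)
    -- all periodic points equal R 0
    have hiter : ∀ k (w : ℂ), R^[k+1] w = R 0 := by
      intro k
      induction k with
      | zero => intro w; simpa using hall w
      | succ k ih => intro w; rw [Function.iterate_succ_apply]; exact ih (R w)
    have hPsub : {z : ℂ | ∃ n : ℕ, 1 ≤ n ∧ R^[n] z = z} ⊆ {R 0} := by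
      rintro z ⟨n, hn, hz⟩
      obtain ⟨m, rfl⟩ : ∃ m, n = m + 1 := ⟨n - 1, by omega⟩
      simp only [Set.mem_singleton_iff]
      rw [← hz]
      exact hiter m z
    have hJsub : J ⊆ {R 0} := by
      intro z hz
      have h1 := closure_mono hPsub (hdense hz)
      rwa [closure_singleton] at h1
    have : chordal a b = 0 := by
      have ha' := hJsub haJ
      have hb' := hJsub hbJ
      simp only [Set.mem_singleton_iff] at ha' hb'
      rw [ha', hb', chordal_self]
    linarith
  obtain ⟨u, v, huB, hvB, huv⟩ := hnc
  have hδ : 0 < chordal (R u) (R v) := chordal_pos huv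
  -- periodic points near a and b
  have hP : ∀ x ∈ J, ∀ ε : ℝ, 0 < ε →
      ∃ p, (∃ n : ℕ, 1 ≤ n ∧ R^[n] p = p) ∧ chordal x p < ε := by
    intro x hx ε hε
    have hx' := hdense hx
    rw [Metric.mem_closure_iff] at hx'
    obtain ⟨p, hpP, hpd⟩ := hx' (ε/2) (by linarith)
    exact ⟨p, hpP, lt_of_le_of_lt (chordal_le_two_mul_dist x p) (by linarith)⟩
  obtain ⟨p, ⟨n, hn1, hpn⟩, hap⟩ := hP a haJ ((chordal a b - 1)/3) (by linarith)
  obtain ⟨q, ⟨m, hm1, hqm⟩, hbq⟩ := hP b hbJ ((chordal a b - 1)/3) (by linarith)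
  have hpq : 1 < chordal p q := by
    have t1 := chordal_triangle a p b
    have t2 := chordal_triangle p q b
    have c1 := chordal_comm a p
    have c2 := chordal_comm q b
    have c3 := chordal_comm b q
    linarith
  -- orbit bounds
  obtain ⟨Cp, hCp⟩ := orbit_bound hn1 hpn
  obtain ⟨Cq, hCq⟩ := orbit_bound hm1 hqm
  set C : ℝ := max Cp Cq with hC
  have hCnn : 0 ≤ C := le_trans (norm_nonneg p) (le_trans (by simpa using hCp 0) (le_max_left _ _))
  -- the radius
  set rK : ℝ := min (min (chordal (R u) (R v) / 2) (1 / (4 * Real.sqrt (1 + C^2)))) 1 with hrK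
  have hrKpos : 0 < rK := by
    apply lt_min (lt_min (by linarith) _) one_pos
    positivity
  refine ⟨rK, ⟨hrKpos, lt_of_le_of_lt (min_le_right _ _) one_lt_two⟩, ?_⟩
  intro r hr z₀ x hx
  set W := connectedComponentIn (R ⁻¹' cball z₀ r) x with hWdef
  by_contra hcon
  rw [not_lt] at hcon
  have key : ∀ y ∈ Wᶜ, ∀ w ∈ Wᶜ, chordal y w ≤ 1 :=
    fun y hy w hw => (chordal_le_diam hy hw).trans hcon
  have hWsub : W ⊆ R ⁻¹' cball z₀ r := connectedComponentIn_subset _ _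
  have hrK1 : rK ≤ chordal (R u) (R v) / 2 := (min_le_left _ _).trans (min_le_left _ _)
  have hrK2 : rK ≤ 1 / (4 * Real.sqrt (1 + C^2)) := (min_le_left _ _).trans (min_le_right _ _)
  have hr0 : 0 < r := hr.1
  have hrrK : r < rK := hr.2
  -- some orbit point is in W
  obtain ⟨e, heW, heC⟩ : ∃ e, e ∈ W ∧ ‖R e‖ ≤ C := by
    by_cases hpW : p ∈ W
    · refine ⟨p, hpW, ?_⟩
      have := hCp 1
      simp only [Function.iterate_one] at this
      exact this.trans (le_max_left _ _)
    · refine ⟨q, ?_, ?_⟩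
      · by_contra hqW
        have := key p (Set.mem_compl hpW) q (Set.mem_compl hqW)
        linarith
      · have := hCq 1
        simp only [Function.iterate_one] at this
        exact this.trans (le_max_right _ _)
  have heball : chordal z₀ (R e) < r := hWsub heW
  -- the spherical ball is inside a bounded disk
  have hball : ∀ w : ℂ, chordal z₀ w < r → ‖w‖ < 2*C+2 := by
    intro w hw
    by_contra hbig
    push_neg at hbig
    have hlow : 1 / (2 * Real.sqrt (1+C^2)) < chordal (R e) w := chordal_lower heC hbig
    have htri : chordal (R e) w ≤ chordal z₀ (R e) + chordal z₀ w := by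
      have := chordal_triangle (R e) z₀ w
      have hc := chordal_comm (R e) z₀
      linarith
    have hsum : chordal z₀ (R e) + chordal z₀ w < 2 * rK := by linarith
    have h2rK : 2 * rK ≤ 1 / (2 * Real.sqrt (1+C^2)) := by
      have hSpos : 0 < Real.sqrt (1+C^2) := Real.sqrt_pos.mpr (by positivity)
      rw [show (1:ℝ) / (2 * Real.sqrt (1+C^2)) = 2 * (1 / (4 * Real.sqrt (1+C^2))) by
        field_simp; ring]
      linarith
    linarith
  by_cases hcase : ∃ z₁, z₁ ∈ Wᶜ ∧ ‖z₁‖ ≤ 3/2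
  · -- Wᶜ is inside the disk of radius 16, so R is bounded, hence constant: contradiction
    obtain ⟨z₁, hz₁W, hz₁⟩ := hcase
    have hfar : ∀ w, w ∈ Wᶜ → ‖w‖ < 16 := by
      intro w hwW
      by_contra hbig
      push_neg at hbig
      have := chordal_gt_one hz₁ hbig
      linarith [key z₁ hz₁W w hwW]
    obtain ⟨M₀, hM₀⟩ := (isCompact_closedBall (0:ℂ) 16).exists_bound_of_continuousOn
      (hR.continuous.continuousOn (s := Metric.closedBall (0:ℂ) 16))
    have hRb : ∀ z : ℂ, ‖R z‖ ≤ max M₀ (2*C+2) := by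
      intro z
      by_cases hz : ‖z‖ ≤ 16
      · refine le_trans (hM₀ z ?_) (le_max_left _ _)
        rw [Metric.mem_closedBall, Complex.dist_eq]
        simpa using hz
      · push_neg at hz
        have hzW : z ∈ W := by
          by_contra h
          exact absurd (hfar z (Set.mem_compl h)) (by linarith)
        have hzb : chordal z₀ (R z) < r := hWsub hzW
        have := hball (R z) hzb
        exact le_trans this.le (le_max_right _ _)
    obtain ⟨cst, hcst⟩ := hR.exists_eq_const_of_bounded (by
      rw [Metric.isBounded_iff_subset_closedBall (0:ℂ)]
      exact ⟨max M₀ (2*C+2), by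
        rintro _ ⟨z, rfl⟩
        rw [Metric.mem_closedBall, Complex.dist_eq]
        simpa using hRb z⟩)
    exact huv (by rw [hcst]; rfl)

  · -- the closed disk of radius 3/2 is inside W, contradicting R u ≠ R v
    push_neg at hcase
    have hmem : ∀ z : ℂ, ‖z‖ ≤ 3/2 → z ∈ W := by
      intro z hz
      by_contra h
      have := hcase z (Set.mem_compl h)
      linarith
    have hu' : chordal z₀ (R u) < r := hWsub (hmem u huB)
    have hv' : chordal z₀ (R v) < r := hWsub (hmem v hvB)
    have htri : chordal (R u) (R v) ≤ chordal z₀ (R u) + chordal z₀ (R v) := by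
      have := chordal_triangle (R u) z₀ (R v)
      have hc := chordal_comm (R u) z₀
      linarith
    linarith
end
end

section
/- Let R be a rational map of degree at least 2, D > 1, (V̂, V) a nice couple for R, and let X ⊆ ℂ̂ have positive Lebesgue measure such that every connected component Ŵ of ℂ̂ \ R⁻¹(K(V̂)) meeting X satisfies Ŵ ⊆ X and R^{m_Ŵ} is univalent on Ŵ with distortion bounded by D. Define ξ(X, V) = |X \ R⁻¹(K(V))| / |X| and Ξ̃(V̂, V) = min{ D²·max_c |V̂^c \ K(V)|/|V̂^c| , 1 - D⁻²·(1 - max_c |V̂^c \ K(V)|/|V̂^c|) }. Then ξ(X, V) ≤ ξ(X, V̂) · Ξ̃(V̂, V). -/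
open Set Metric MeasureTheory

noncomputable section

/-- Spherical area of a subset of `ℂ ⊆ ℂ̂`. -/
def sphArea (E : Set ℂ) : ℝ := ∫ z in E, 4 / (1 + ‖z‖ ^ 2) ^ 2

/-- Spherical derivative of `f` at `z`. -/
def sphDeriv (f : ℂ → ℂ) (z : ℂ) : ℝ :=
  ‖deriv f z‖ * (1 + ‖z‖ ^ 2) / (1 + ‖f z‖ ^ 2)

/-- `K(S) = {z : Rʲ z ∉ S for all j ≥ 0}`. -/
def Ktower (R : ℂ → ℂ) (S : Set ℂ) : Set ℂ := {z : ℂ | ∀ j : ℕ, R^[j] z ∉ S}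

def f0 (z : ℂ) : ℝ := 4 / (1 + ‖z‖ ^ 2) ^ 2

lemma f0_pos (z : ℂ) : 0 < f0 z := by
  unfold f0; positivity

lemma f0_le (z : ℂ) : f0 z ≤ 4 := by
  unfold f0
  rw [div_le_iff₀ (by positivity)]
  nlinarith [norm_nonneg z, sq_nonneg ‖z‖]

lemma f0_cont : Continuous f0 := by
  have h : Continuous fun z : ℂ => (1 + ‖z‖ ^ 2) ^ 2 :=
    ((continuous_const.add (continuous_norm.pow 2)).pow 2)
  exact continuous_const.div h (fun z => by positivity)

lemma f0_integrable : Integrable f0 (volume : Measure ℂ) := by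
  have h4 : ((Module.finrank ℝ ℂ : ℝ) < 4) := by
    rw [Complex.finrank_real_complex]; norm_num
  refine ((integrable_one_add_norm (E := ℂ) h4).const_mul 16).mono' ?_ ?_
  · exact f0_cont.aestronglyMeasurable
  · refine Filter.Eventually.of_forall (fun z => ?_)
    have hz : ‖z‖ = ‖z‖ := rfl
    have he : ((1:ℝ) + ‖z‖) ^ (-(4:ℝ)) = ((1 + ‖z‖)^(4:ℕ))⁻¹ := by
      rw [Real.rpow_neg (by positivity), ← Real.rpow_natCast (1 + ‖z‖) 4]
      norm_num
    rw [Real.norm_eq_abs, abs_of_pos (f0_pos z)]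
    unfold f0
    rw [hz, he, ← div_eq_mul_inv, div_le_div_iff₀ (by positivity) (by positivity)]
    nlinarith [norm_nonneg z, sq_nonneg (1 - ‖z‖), sq_nonneg ((1+‖z‖)^2), sq_nonneg (1 - ‖z‖^2),
      sq_nonneg (‖z‖ - ‖z‖^2), sq_nonneg (1 + ‖z‖^2 - (1+‖z‖)^2 / 2)]

def mu0 : Measure ℂ := volume.withDensity (fun z => ENNReal.ofReal (f0 z))

lemma mu0_apply {E : Set ℂ} (hE : MeasurableSet E) :
    mu0 E = ∫⁻ z in E, ENNReal.ofReal (f0 z) ∂(volume : Measure ℂ) :=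
  withDensity_apply _ hE

lemma mu0_univ_lt_top : mu0 univ < ⊤ := by
  rw [mu0_apply MeasurableSet.univ, setLIntegral_univ]
  exact f0_integrable.lintegral_lt_top

lemma mu0_lt_top (E : Set ℂ) : mu0 E ≠ ⊤ :=
  ((measure_mono (subset_univ E)).trans_lt mu0_univ_lt_top).ne

lemma sphArea_eq {E : Set ℂ} (hE : MeasurableSet E) : sphArea E = (mu0 E).toReal := by
  rw [mu0_apply hE]
  have h1 : sphArea E = ∫ z in E, f0 z := rfl
  rw [h1, integral_eq_lintegral_of_nonneg_ae (Filter.Eventually.of_forall (fun z => (f0_pos z).le))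
    (f0_cont.aestronglyMeasurable.restrict)]

lemma mu0_pos_of_isOpen {E : Set ℂ} (hE : IsOpen E) (hne : E.Nonempty) : 0 < mu0 E := by
  obtain ⟨z0, hz0⟩ := hne
  obtain ⟨r, hr, hball⟩ := Metric.isOpen_iff.1 hE z0 hz0
  set c : ℝ := 4 / (1 + (‖z0‖ + r) ^ 2) ^ 2 with hc
  have hcpos : 0 < c := by positivity
  have hball_meas : MeasurableSet (Metric.ball z0 r) := measurableSet_ball
  have hlow : ∀ z ∈ Metric.ball z0 r, ENNReal.ofReal c ≤ ENNReal.ofReal (f0 z) := by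
    intro z hz
    apply ENNReal.ofReal_le_ofReal
    have hzn : ‖z‖ ≤ ‖z0‖ + r := by
      have := mem_ball_iff_norm.1 hz
      have h2 := norm_sub_norm_le z z0
      linarith [this, h2]
    have habs : ‖z‖ = ‖z‖ := rfl
    unfold f0
    rw [habs]
    apply div_le_div_of_nonneg_left (by norm_num) (by positivity)
    have h0 : (0:ℝ) ≤ ‖z‖ := norm_nonneg z
    have h1 : ‖z‖^2 ≤ (‖z0‖ + r)^2 := by nlinarith [norm_nonneg z0, hr.le]
    nlinarith
  have : ENNReal.ofReal c * volume (Metric.ball z0 r) ≤ mu0 (Metric.ball z0 r) := by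
    rw [mu0_apply hball_meas]
    calc ENNReal.ofReal c * volume (Metric.ball z0 r)
        = ∫⁻ _ in Metric.ball z0 r, ENNReal.ofReal c ∂volume := by
          rw [setLIntegral_const, mul_comm]
      _ ≤ _ := setLIntegral_mono' hball_meas hlow
  have hbp : 0 < volume (Metric.ball z0 r) := Metric.measure_ball_pos _ _ hr
  have h1 : 0 < mu0 (Metric.ball z0 r) :=
    lt_of_lt_of_le (by exact ENNReal.mul_pos (by simp [hcpos]) hbp.ne' ) this
  exact h1.trans_le (measure_mono hball)

-- determinant of multiplication by a complex number, as a real-linear map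
lemma det_complex_mul (a : ℂ) :
    ((ContinuousLinearMap.smulRight (1 : ℂ →L[ℂ] ℂ) a).restrictScalars ℝ).det
      = Complex.normSq a := by
  have : ((ContinuousLinearMap.smulRight (1 : ℂ →L[ℂ] ℂ) a).restrictScalars ℝ : ℂ →ₗ[ℝ] ℂ)
      = (LinearMap.mk (AddHom.mk (fun z => z * a) (fun x y => add_mul x y a))
          (fun (c : ℝ) x => by simp [Complex.real_smul]; ring)) := by
    ext z
    simp [smul_eq_mul]
  rw [ContinuousLinearMap.det, this, ← LinearMap.det_toMatrix Complex.basisOneI]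
  rw [Matrix.det_fin_two]
  simp only [LinearMap.toMatrix_apply, Complex.coe_basisOneI_repr, Complex.coe_basisOneI]
  simp [Complex.normSq_apply]

example : (volume : Measure ℂ).IsAddHaarMeasure := by infer_instance

-- change of variables for mu0 under a holomorphic injective map
lemma mu0_image_eq (f : ℂ → ℂ) (hf : Differentiable ℂ f) {A : Set ℂ}
    (hA : MeasurableSet A) (hinj : InjOn f A) :
    (∫⁻ z in f '' A, ENNReal.ofReal (f0 z) ∂volume)
      = ∫⁻ z in A, ENNReal.ofReal (sphDeriv f z ^ 2 * f0 z) ∂volume := by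
  have hder : ∀ x ∈ A, HasFDerivWithinAt f
      (((ContinuousLinearMap.smulRight (1 : ℂ →L[ℂ] ℂ) (deriv f x)).restrictScalars ℝ)) A x := by
    intro x _
    exact ((hf x).hasDerivAt.hasFDerivAt.restrictScalars ℝ).hasFDerivWithinAt
  rw [lintegral_image_eq_lintegral_abs_det_fderiv_mul volume hA hder hinj]
  apply setLIntegral_congr_fun hA
  refine (fun x _ => ?_)
  beta_reduce
  rw [det_complex_mul, ← ENNReal.ofReal_mul (by positivity)]
  congr 1
  have habs : |Complex.normSq (deriv f x)| = ‖deriv f x‖ ^ 2 := by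
    rw [abs_of_nonneg (Complex.normSq_nonneg _), Complex.sq_norm]
  rw [habs]
  unfold sphDeriv f0
  have h1 : (0:ℝ) < 1 + ‖x‖ ^ 2 := by positivity
  have h2 : (0:ℝ) < 1 + ‖f x‖ ^ 2 := by positivity
  have hn : ‖deriv f x‖ = ‖deriv f x‖ := rfl
  field_simp

lemma sphDeriv_nonneg (f : ℂ → ℂ) (z : ℂ) : 0 ≤ sphDeriv f z := by
  unfold sphDeriv
  positivity

lemma per_component (f : ℂ → ℂ) (hf : Differentiable ℂ f)
    {W Vhc KV : Set ℂ} (hWopen : IsOpen W) (hWne : W.Nonempty)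
    (hVhcopen : IsOpen Vhc) (hVhcne : Vhc.Nonempty) (hKmeas : MeasurableSet KV)
    (hbij : Set.BijOn f W Vhc) {D : ℝ} (hD : 1 ≤ D)
    (hdist : ∀ z ∈ W, ∀ w ∈ W, sphDeriv f z ≤ D * sphDeriv f w) :
    (mu0 (W ∩ f ⁻¹' (Vhc \ KV))).toReal ≤
      min (D ^ 2 * ((mu0 (Vhc \ KV)).toReal / (mu0 Vhc).toReal))
          (1 - (D ^ 2)⁻¹ * (1 - (mu0 (Vhc \ KV)).toReal / (mu0 Vhc).toReal))
        * (mu0 W).toReal := by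
  have hDpos : (0:ℝ) < D := lt_of_lt_of_le one_pos hD
  set g : ℂ → ℝ := sphDeriv f with hg
  have hWmeas : MeasurableSet W := hWopen.measurableSet
  have hVhcmeas : MeasurableSet Vhc := hVhcopen.measurableSet
  have hfm : Measurable f := hf.continuous.measurable
  set A : Set ℂ := W ∩ f ⁻¹' (Vhc \ KV) with hA
  set B : Set ℂ := W \ f ⁻¹' (Vhc \ KV) with hB
  have hAmeas : MeasurableSet A := hWmeas.inter (hfm (hVhcmeas.diff hKmeas))
  have hBmeas : MeasurableSet B := hWmeas.diff (hfm (hVhcmeas.diff hKmeas))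
  have hAW : A ⊆ W := inter_subset_left
  have hBW : B ⊆ W := diff_subset
  -- images
  have himgW : f '' W = Vhc := hbij.image_eq
  have himgA : f '' A = Vhc \ KV := by
    rw [hA, image_inter_preimage, himgW, inter_eq_self_of_subset_right diff_subset]
  have himgB : f '' B = Vhc ∩ KV := by
    rw [hB, image_diff_preimage, himgW, diff_diff_right_self]
  -- the infimum of the spherical derivative on W
  have hWne' : Nonempty ↥W := hWne.to_subtype
  set i : ℝ := ⨅ z : W, g z with hi
  have hbdd : BddBelow (range fun z : W => g z) :=
    ⟨0, by rintro _ ⟨z, rfl⟩; exact sphDeriv_nonneg f z⟩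
  have hi_nonneg : 0 ≤ i := le_ciInf (fun z => sphDeriv_nonneg f z)
  have hi_le : ∀ z ∈ W, i ≤ g z := fun z hz => ciInf_le hbdd ⟨z, hz⟩
  have hle_Di : ∀ z ∈ W, g z ≤ D * i := by
    intro z hz
    rw [← div_le_iff₀' hDpos]
    exact le_ciInf (fun w => (div_le_iff₀' hDpos).2 (hdist z hz w.1 w.2))
  -- change of variables bounds
  have cov : ∀ A' : Set ℂ, MeasurableSet A' → A' ⊆ W →
      ENNReal.ofReal (i ^ 2) * mu0 A' ≤ ∫⁻ z in f '' A', ENNReal.ofReal (f0 z) ∂volume ∧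
      (∫⁻ z in f '' A', ENNReal.ofReal (f0 z) ∂volume) ≤ ENNReal.ofReal ((D*i) ^ 2) * mu0 A' := by
    intro A' hA'meas hA'W
    rw [mu0_image_eq f hf hA'meas (hbij.injOn.mono hA'W), mu0_apply hA'meas]
    constructor
    · rw [← lintegral_const_mul' _ _ ENNReal.ofReal_ne_top]
      refine setLIntegral_mono' hA'meas (fun z hz => ?_)
      rw [← ENNReal.ofReal_mul (by positivity)]
      refine ENNReal.ofReal_le_ofReal ?_
      have h1 := hi_le z (hA'W hz)
      rw [hg] at h1
      have h2 := f0_pos z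
      have h3 : i^2 ≤ sphDeriv f z ^ 2 := by nlinarith [hi_nonneg]
      exact mul_le_mul_of_nonneg_right h3 h2.le
    · rw [← lintegral_const_mul' _ _ ENNReal.ofReal_ne_top]
      refine setLIntegral_mono' hA'meas (fun z hz => ?_)
      rw [← ENNReal.ofReal_mul (by positivity)]
      refine ENNReal.ofReal_le_ofReal ?_
      have h1 := hle_Di z (hA'W hz)
      rw [hg] at h1
      have h2 := f0_pos z
      have h3 : sphDeriv f z ^ 2 ≤ (D*i)^2 := by nlinarith [sphDeriv_nonneg f z, hi_nonneg, mul_nonneg hDpos.le hi_nonneg]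
      exact mul_le_mul_of_nonneg_right h3 h2.le
  -- translate to the explicit measurable images
  have hPmeas : MeasurableSet (Vhc \ KV) := hVhcmeas.diff hKmeas
  have hQmeas : MeasurableSet (Vhc ∩ KV) := hVhcmeas.inter hKmeas
  obtain ⟨e1E, _⟩ := cov A hAmeas hAW
  obtain ⟨_, e3E⟩ := cov B hBmeas hBW
  obtain ⟨e4E, e2E⟩ := cov W hWmeas (subset_refl W)
  rw [himgA, ← mu0_apply hPmeas] at e1E
  rw [himgB, ← mu0_apply hQmeas] at e3E
  rw [himgW, ← mu0_apply hVhcmeas] at e2E e4E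
  -- pass to real numbers
  set p : ℝ := (mu0 (Vhc \ KV)).toReal with hp
  set q : ℝ := (mu0 (Vhc ∩ KV)).toReal with hq
  set v : ℝ := (mu0 Vhc).toReal with hv
  set α : ℝ := (mu0 A).toReal with hα
  set β : ℝ := (mu0 B).toReal with hβ
  set u : ℝ := (mu0 W).toReal with hu
  have hfin : ∀ S : Set ℂ, mu0 S ≠ ⊤ := mu0_lt_top
  have hnn : ∀ S : Set ℂ, 0 ≤ (mu0 S).toReal := fun S => ENNReal.toReal_nonneg
  have e1 : i ^ 2 * α ≤ p := by
    have := ENNReal.toReal_mono (hfin _) e1E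
    rwa [ENNReal.toReal_mul, ENNReal.toReal_ofReal (by positivity)] at this
  have e3 : q ≤ (D*i) ^ 2 * β := by
    have := ENNReal.toReal_mono (by exact ENNReal.mul_ne_top ENNReal.ofReal_ne_top (hfin _)) e3E
    rwa [ENNReal.toReal_mul, ENNReal.toReal_ofReal (by positivity)] at this
  have e4 : i ^ 2 * u ≤ v := by
    have := ENNReal.toReal_mono (hfin _) e4E
    rwa [ENNReal.toReal_mul, ENNReal.toReal_ofReal (by positivity)] at this
  have e2 : v ≤ (D*i) ^ 2 * u := by
    have := ENNReal.toReal_mono (by exact ENNReal.mul_ne_top ENNReal.ofReal_ne_top (hfin _)) e2E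
    rwa [ENNReal.toReal_mul, ENNReal.toReal_ofReal (by positivity)] at this
  -- additivity
  have hsum : α + β = u := by
    rw [hα, hβ, hu, ← ENNReal.toReal_add (hfin _) (hfin _)]
    congr 1
    exact measure_inter_add_diff W (hfm hPmeas)
  have hvpq : p + q = v := by
    rw [hp, hq, hv, ← ENNReal.toReal_add (hfin _) (hfin _)]
    congr 1
    rw [add_comm]
    exact measure_inter_add_diff Vhc hKmeas
  -- positivity
  have hvpos : 0 < v := by
    rw [hv]
    exact ENNReal.toReal_pos (mu0_pos_of_isOpen hVhcopen hVhcne).ne' (hfin _)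
  have hipos : 0 < i := by
    rcases lt_or_eq_of_le hi_nonneg with h | h
    · exact h
    · exfalso; rw [← h] at e2; simp at e2; nlinarith
  have hupos : 0 < u := by nlinarith [sq_nonneg (D*i)]
  have hαnn : 0 ≤ α := hnn _
  have hβnn : 0 ≤ β := hnn _
  have hpnn : 0 ≤ p := hnn _
  have hqnn : 0 ≤ q := hnn _
  -- final arithmetic
  rw [min_mul_of_nonneg _ _ hupos.le, le_min_iff]
  have hD2pos : (0:ℝ) < D^2 := by positivity
  constructor
  · -- α ≤ D^2 * (p/v) * u
    have key : α * v ≤ D^2 * (p * u) := by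
      calc α * v ≤ α * ((D*i)^2 * u) := mul_le_mul_of_nonneg_left e2 hαnn
        _ = (i^2*α) * (D^2*u) := by ring
        _ ≤ p * (D^2*u) := mul_le_mul_of_nonneg_right e1 (by positivity)
        _ = D^2*(p*u) := by ring
    have h1 : D ^ 2 * (p / v) * u - α = (D^2 * (p*u) - α * v) / v := by
      field_simp
    linarith [div_nonneg (sub_nonneg.2 key) hvpos.le, h1]
  · -- α ≤ (1 - D⁻²(1 - p/v)) * u
    have key2 : q * u ≤ D^2 * (β * v) := by
      calc q*u ≤ ((D*i)^2*β)*u := mul_le_mul_of_nonneg_right e3 hupos.le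
        _ = (D^2*β)*(i^2*u) := by ring
        _ ≤ (D^2*β)*v := mul_le_mul_of_nonneg_left e4 (by positivity)
        _ = D^2*(β*v) := by ring
    have h1 : (1 - (D ^ 2)⁻¹ * (1 - p / v)) * u - α = (D^2*(β*v) - q*u)/(D^2*v) := by
      have hp' : p = v - q := by linarith
      have hα' : α = u - β := by linarith
      rw [hp', hα']
      field_simp
      ring
    linarith [div_nonneg (sub_nonneg.2 key2) (by positivity : (0:ℝ) ≤ D^2*v), h1]

lemma ktower_closed (R : ℂ → ℂ) (hR : Continuous R) {S : Set ℂ} (hS : IsOpen S) :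
    IsClosed (Ktower R S) := by
  have : Ktower R S = ⋂ j : ℕ, R^[j] ⁻¹' Sᶜ := by
    ext z; simp [Ktower]
  rw [this]
  exact isClosed_iInter (fun j => (hS.isClosed_compl).preimage (hR.iterate j))

lemma exclusion (R : ℂ → ℂ) (hR : Differentiable ℂ R)
    {SV SVh : Set ℂ} (hSV : IsOpen SV) (hSVh : IsOpen SVh) (hSVne : SV.Nonempty)
    (hclos : closure SV ⊆ SVh)
    (hMarkov' : ∀ n : ℕ, 1 ≤ n → ∀ x ∈ R^[n] ⁻¹' SVh,
      closure (connectedComponentIn (R^[n] ⁻¹' SVh) x) ∩ closure SV = ∅ ∨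
      closure (connectedComponentIn (R^[n] ⁻¹' SVh) x) ⊆ SV)
    (x₀ : ℂ) (hx₀ : x₀ ∈ (R ⁻¹' Ktower R SVh)ᶜ)
    {m : ℕ} {Vhc : Set ℂ} (hVhc_open : IsOpen Vhc) (hVhc_sub : Vhc ⊆ SVh)
    (hbij : Set.BijOn (R^[m]) (connectedComponentIn (R ⁻¹' Ktower R SVh)ᶜ x₀) Vhc)
    {z : ℂ} (hz : z ∈ connectedComponentIn (R ⁻¹' Ktower R SVh)ᶜ x₀)
    {j : ℕ} (hj1 : 1 ≤ j) (hjV : R^[j] z ∈ SV) :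
    ∃ i : ℕ, R^[i] (R^[m] z) ∈ SV := by
  set U : Set ℂ := (R ⁻¹' Ktower R SVh)ᶜ with hU
  set W : Set ℂ := connectedComponentIn U x₀ with hW
  by_cases hmj : m ≤ j
  · refine ⟨j - m, ?_⟩
    have : R^[j - m] (R^[m] z) = R^[j] z := by
      rw [← Function.iterate_add_apply]
      congr 1
      omega
    rw [this]; exact hjV
  push_neg at hmj   -- j < m
  have hRc : Continuous R := hR.continuous
  have hUopen : IsOpen U := by
    rw [hU]
    exact (IsClosed.preimage hRc (ktower_closed R hRc hSVh)).isOpen_compl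
  set n : ℕ := m - j with hn
  have hn1 : 1 ≤ n := by omega
  have hnj : n + j = m := by omega
  have hWOm : ∀ w ∈ W, R^[m] w ∈ SVh := fun w hw => hVhc_sub (hbij.mapsTo hw)
  -- step 1: spreading
  have hjz : R^[j] z ∈ R^[n] ⁻¹' SVh := by
    simp only [mem_preimage, ← Function.iterate_add_apply, hnj]
    exact hWOm z hz
  set C' : Set ℂ := connectedComponentIn (R^[n] ⁻¹' SVh) (R^[j] z) with hC'
  have himg : R^[j] '' W ⊆ C' := by
    refine IsPreconnected.subset_connectedComponentIn ?_ ⟨z, hz, rfl⟩ ?_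
    · exact (isPreconnected_connectedComponentIn).image _ ((hRc.iterate j).continuousOn)
    · rintro _ ⟨w, hw, rfl⟩
      simp only [mem_preimage, ← Function.iterate_add_apply, hnj]
      exact hWOm w hw
  have hC'SV : closure C' ⊆ SV := by
    rcases hMarkov' n hn1 (R^[j] z) hjz with h | h
    · exfalso
      have : R^[j] z ∈ closure C' ∩ closure SV :=
        ⟨subset_closure (mem_connectedComponentIn hjz), subset_closure hjV⟩
      rw [h] at this
      exact this
    · exact h
  have hWjSV : ∀ w ∈ W, R^[j] w ∈ SV := fun w hw =>
    hC'SV (subset_closure (himg ⟨w, hw, rfl⟩))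
  -- step 2: W is a component of Ω_j
  have hWΩj : ∀ w ∈ W, w ∈ R^[j] ⁻¹' SVh := fun w hw =>
    mem_preimage.2 (hclos (subset_closure (hWjSV w hw)))
  have hzW : z ∈ R^[j] ⁻¹' SVh := hWΩj z hz
  have hWsub : W ⊆ connectedComponentIn (R^[j] ⁻¹' SVh) z :=
    IsPreconnected.subset_connectedComponentIn isPreconnected_connectedComponentIn hz hWΩj
  have hCjU : connectedComponentIn (R^[j] ⁻¹' SVh) z ⊆ U := by
    intro w hw
    have hw' : R^[j] w ∈ SVh := mem_preimage.1 (connectedComponentIn_subset (R^[j] ⁻¹' SVh) z hw)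
    simp only [hU, mem_compl_iff, mem_preimage, Ktower, mem_setOf_eq]
    push_neg
    refine ⟨j - 1, ?_⟩
    have : R^[j-1] (R w) = R^[j] w := by
      rw [← Function.iterate_succ_apply]
      congr 1
      omega
    rw [this]; exact hw'
  have hWeq : connectedComponentIn (R^[j] ⁻¹' SVh) z = W := by
    refine Subset.antisymm ?_ hWsub
    have h1 : connectedComponentIn U z = W :=
      (connectedComponentIn_eq (show z ∈ connectedComponentIn U x₀ from hz)).symm
    rw [← h1]
    exact IsPreconnected.subset_connectedComponentIn isPreconnected_connectedComponentIn
      (mem_connectedComponentIn hzW) hCjU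
  by_cases hWuniv : W = univ
  · -- W = ℂ
    by_cases hSVhuniv : SVh = univ
    · -- Markov forces SV = univ
      have h1 : (1:ℕ) ≤ 1 := le_refl 1
      have hx1 : z ∈ R^[1] ⁻¹' SVh := by simp [hSVhuniv]
      have hcomp1 : connectedComponentIn (R^[1] ⁻¹' SVh) z = univ := by
        have : R^[1] ⁻¹' SVh = univ := by simp [hSVhuniv]
        rw [this, connectedComponentIn_univ]
        exact PreconnectedSpace.connectedComponent_eq_univ z
      rcases hMarkov' 1 h1 z hx1 with h | h
      · exfalso
        rw [hcomp1, closure_univ, univ_inter] at h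
        obtain ⟨y, hy⟩ := hSVne
        exact (h ▸ (subset_closure hy) : y ∈ (∅ : Set ℂ))
      · rw [hcomp1, closure_univ] at h
        exact ⟨0, by simpa using h (mem_univ _)⟩
    · -- Liouville
      exfalso
      obtain ⟨q, hq⟩ : ∃ q, q ∉ SVh := by
        by_contra h
        push_neg at h
        exact hSVhuniv (eq_univ_of_forall h)
      have hqG : q ∈ (closure SV)ᶜ := fun hqc => hq (hclos hqc)
      obtain ⟨ε, hε, hball⟩ := Metric.isOpen_iff.1 (isClosed_closure.isOpen_compl) q hqG
      have havoid : ∀ w : ℂ, ε ≤ dist (R^[j] w) q := by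
        intro w
        by_contra h
        push_neg at h
        have : R^[j] w ∈ (closure SV)ᶜ := hball (Metric.mem_ball.2 h)
        exact this (subset_closure (hWjSV w (by simp [hWuniv])))
      have hne0 : ∀ w : ℂ, R^[j] w - q ≠ 0 := by
        intro w h
        have := havoid w
        rw [dist_eq_norm, h] at this
        simp at this
        linarith
      set F : ℂ → ℂ := fun w => (R^[j] w - q)⁻¹ with hF
      have hFdiff : Differentiable ℂ F := ((hR.iterate j).sub_const q).inv hne0
      have hFbdd : Bornology.IsBounded (range F) := by
        rw [Metric.isBounded_iff_subset_closedBall 0]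
        refine ⟨ε⁻¹, ?_⟩
        rintro _ ⟨w, rfl⟩
        rw [Metric.mem_closedBall, dist_zero_right, hF]
        rw [norm_inv]
        have h1 : ε ≤ ‖R^[j] w - q‖ := by rw [← dist_eq_norm]; exact havoid w
        exact inv_anti₀ hε h1
      have hconst : ∀ w, R^[j] w = R^[j] z := by
        intro w
        have h := hFdiff.apply_eq_apply_of_bounded hFbdd w z
        rw [hF] at h
        simp only at h
        have := inv_injective h
        have h2 : R^[j] w - q = R^[j] z - q := this
        linear_combination h2
      have hconstm : ∀ w, R^[m] w = R^[m] z := by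
        intro w
        have h1 : R^[m] w = R^[n] (R^[j] w) := by
          rw [← Function.iterate_add_apply, hnj]
        have h2 : R^[m] z = R^[n] (R^[j] z) := by
          rw [← Function.iterate_add_apply, hnj]
        rw [h1, h2, hconst w]
      have hVhceq : Vhc = {R^[m] z} := by
        rw [← hbij.image_eq, hWuniv]
        apply Subset.antisymm
        · rintro _ ⟨w, _, rfl⟩
          rw [hconstm w]; rfl
        · rintro y hy
          rw [mem_singleton_iff] at hy
          exact ⟨z, (by simp [hWuniv]), hy.symm⟩
      obtain ⟨r, hr, hball'⟩ := Metric.isOpen_iff.1 hVhc_open (R^[m] z) (hVhceq ▸ rfl)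
      have h1 : R^[m] z + (r/2 : ℝ) ∈ Metric.ball (R^[m] z) r := by
        rw [Metric.mem_ball, dist_eq_norm]
        simp only [add_sub_cancel_left]
        rw [Complex.norm_real, Real.norm_eq_abs, abs_of_pos (by linarith)]
        linarith
      have h2 := hball' h1
      rw [hVhceq, mem_singleton_iff] at h2
      have : ((r/2 : ℝ) : ℂ) = 0 := by linear_combination h2
      rw [Complex.ofReal_eq_zero] at this
      linarith
  · -- W ≠ univ : boundary contradiction
    exfalso
    have hWopen : IsOpen W := hUopen.connectedComponentIn
    have hWne : W.Nonempty := ⟨z, hz⟩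
    have hfr : (frontier W).Nonempty := by
      rw [nonempty_iff_ne_empty]
      intro h
      rcases frontier_eq_empty_iff.1 h with h1 | h1
      · exact hWne.ne_empty h1
      · exact hWuniv h1
    obtain ⟨w', hw'⟩ := hfr
    have hw'cl : w' ∈ closure W := hw'.1
    have hw'Ωj : w' ∈ R^[j] ⁻¹' SVh := by
      have h1 : R^[j] w' ∈ closure (R^[j] '' W) := by
        apply image_closure_subset_closure_image (hRc.iterate j)
        exact ⟨w', hw'cl, rfl⟩
      have h2 : closure (R^[j] '' W) ⊆ closure SV := by
        apply closure_mono
        rintro _ ⟨w, hw, rfl⟩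
        exact hWjSV w hw
      exact mem_preimage.2 (hclos (h2 h1))
    set W₂ : Set ℂ := connectedComponentIn (R^[j] ⁻¹' SVh) w' with hW₂
    have hW₂open : IsOpen W₂ := (hSVh.preimage (hRc.iterate j)).connectedComponentIn
    have hW₂mem : w' ∈ W₂ := mem_connectedComponentIn hw'Ωj
    obtain ⟨y, hyW₂, hyW⟩ : (W₂ ∩ W).Nonempty := by
      rcases (_root_.mem_closure_iff.1 hw'cl) W₂ hW₂open hW₂mem with ⟨y, hy1, hy2⟩
      exact ⟨y, hy1, hy2⟩
    have hWy : connectedComponentIn (R^[j] ⁻¹' SVh) y = W := by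
      rw [← hWeq]
      exact (connectedComponentIn_eq
        (show y ∈ connectedComponentIn (R^[j] ⁻¹' SVh) z from hWeq ▸ hyW)).symm
    have hW₂y : connectedComponentIn (R^[j] ⁻¹' SVh) y = W₂ :=
      (connectedComponentIn_eq (show y ∈ connectedComponentIn (R^[j] ⁻¹' SVh) w' from hyW₂)).symm
    have : w' ∈ W := by rw [← hWy, hW₂y]; exact hW₂mem
    rw [frontier, hWopen.interior_eq] at hw'
    exact hw'.2 this

/-- Density-transfer lemma for a nice couple `(V̂, V)`: if every component `Ŵ` of
`ℂ̂ \ R⁻¹(K(V̂))` meeting `X` is contained in `X` and `R^{m_Ŵ}` is univalent on `Ŵ`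
with (spherical-derivative) distortion at most `D`, then
`ξ(X, V) ≤ ξ(X, V̂) · Ξ̃(V̂, V)`. -/
theorem stmt11 (R : ℂ → ℂ) (hR : Differentiable ℂ R)
    (CJ : Finset ℂ) (hne : CJ.Nonempty)
    (hCJcrit : ∀ c ∈ CJ, deriv R c = 0)
    (Vh V : ℂ → Set ℂ)
    (hopen : ∀ c ∈ CJ, IsOpen (V c) ∧ IsOpen (Vh c))
    (hmem : ∀ c ∈ CJ, c ∈ V c)
    (hnest : ∀ c ∈ CJ, closure (V c) ⊆ Vh c)
    (hdisj : ∀ c ∈ CJ, ∀ c' ∈ CJ, c ≠ c' → closure (Vh c) ∩ closure (Vh c') = ∅)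
    -- the Markov property of the nice couple: every pull-back of `V̂` has closure
    -- disjoint from, or contained in, `V` (and similarly for `V̂`).
    (hMarkov : ∀ n : ℕ, 1 ≤ n → ∀ x ∈ R^[n] ⁻¹' (⋃ c ∈ CJ, Vh c),
        (closure (connectedComponentIn (R^[n] ⁻¹' (⋃ c ∈ CJ, Vh c)) x) ∩
            closure (⋃ c ∈ CJ, V c) = ∅ ∨
          closure (connectedComponentIn (R^[n] ⁻¹' (⋃ c ∈ CJ, Vh c)) x) ⊆
            ⋃ c ∈ CJ, V c) ∧
        (closure (connectedComponentIn (R^[n] ⁻¹' (⋃ c ∈ CJ, Vh c)) x) ∩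
            closure (⋃ c ∈ CJ, Vh c) = ∅ ∨
          closure (connectedComponentIn (R^[n] ⁻¹' (⋃ c ∈ CJ, Vh c)) x) ⊆
            ⋃ c ∈ CJ, Vh c))
    (D : ℝ) (hD : 1 < D)
    (X : Set ℂ) (hXmeas : MeasurableSet X) (hXpos : 0 < sphArea X)
    -- every component `Ŵ` of `ℂ̂ \ R⁻¹(K(V̂))` meeting `X` lies in `X`, and some
    -- iterate `R^{m_Ŵ}` maps it univalently onto a component `V̂^c` with
    -- distortion bounded by `D`.
    (hcomp : ∀ x ∈ (R ⁻¹' Ktower R (⋃ c ∈ CJ, Vh c))ᶜ,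
        (connectedComponentIn (R ⁻¹' Ktower R (⋃ c ∈ CJ, Vh c))ᶜ x ∩ X).Nonempty →
        connectedComponentIn (R ⁻¹' Ktower R (⋃ c ∈ CJ, Vh c))ᶜ x ⊆ X ∧
        ∃ m : ℕ, ∃ c ∈ CJ,
          Set.BijOn (R^[m])
            (connectedComponentIn (R ⁻¹' Ktower R (⋃ c ∈ CJ, Vh c))ᶜ x) (Vh c) ∧
          (∀ z ∈ connectedComponentIn (R ⁻¹' Ktower R (⋃ c ∈ CJ, Vh c))ᶜ x,
            ∀ w ∈ connectedComponentIn (R ⁻¹' Ktower R (⋃ c ∈ CJ, Vh c))ᶜ x,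
              sphDeriv (R^[m]) z ≤ D * sphDeriv (R^[m]) w)) :
    sphArea (X \ R ⁻¹' Ktower R (⋃ c ∈ CJ, V c)) / sphArea X ≤
      (sphArea (X \ R ⁻¹' Ktower R (⋃ c ∈ CJ, Vh c)) / sphArea X) *
        min (D ^ 2 * CJ.sup' hne (fun c =>
              sphArea (Vh c \ Ktower R (⋃ c' ∈ CJ, V c')) / sphArea (Vh c)))
          (1 - (D ^ 2)⁻¹ * (1 - CJ.sup' hne (fun c =>
              sphArea (Vh c \ Ktower R (⋃ c' ∈ CJ, V c')) / sphArea (Vh c)))) := by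
  have hRc : Continuous R := hR.continuous
  set SV : Set ℂ := ⋃ c ∈ CJ, V c with hSV
  set SVh : Set ℂ := ⋃ c ∈ CJ, Vh c with hSVh
  have hSVopen : IsOpen SV := isOpen_biUnion (fun c hc => (hopen c hc).1)
  have hSVhopen : IsOpen SVh := isOpen_biUnion (fun c hc => (hopen c hc).2)
  have hSVne : SV.Nonempty := by
    obtain ⟨c₀, hc₀⟩ := hne
    exact ⟨c₀, mem_biUnion hc₀ (hmem c₀ hc₀)⟩
  have hclos : closure SV ⊆ SVh := by
    rw [hSV, Finset.closure_biUnion]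
    exact iUnion₂_mono (fun c hc => hnest c hc)
  set KV : Set ℂ := Ktower R SV with hKV
  set KVh : Set ℂ := Ktower R SVh with hKVh
  have hKVclosed : IsClosed KV := ktower_closed R hRc hSVopen
  have hKVhclosed : IsClosed KVh := ktower_closed R hRc hSVhopen
  have hKVmeas : MeasurableSet KV := hKVclosed.measurableSet
  set U : Set ℂ := (R ⁻¹' KVh)ᶜ with hU
  have hUopen : IsOpen U := (hKVhclosed.preimage hRc).isOpen_compl
  have hUmeas : MeasurableSet U := hUopen.measurableSet
  -- membership in complements of Ktower preimages
  have hmemKV : ∀ z : ℂ, z ∉ R ⁻¹' KV ↔ ∃ i : ℕ, 1 ≤ i ∧ R^[i] z ∈ SV := by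
    intro z
    simp only [mem_preimage, hKV, Ktower, mem_setOf_eq]
    push_neg
    constructor
    · rintro ⟨i, hi⟩
      exact ⟨i + 1, by omega, by rwa [Function.iterate_succ_apply]⟩
    · rintro ⟨i, hi1, hi⟩
      refine ⟨i - 1, ?_⟩
      have h : i = (i - 1) + 1 := by omega
      rw [h, Function.iterate_succ_apply] at hi
      exact hi
  have hmemKVh : ∀ z : ℂ, z ∉ R ⁻¹' KVh ↔ ∃ i : ℕ, 1 ≤ i ∧ R^[i] z ∈ SVh := by
    intro z
    simp only [mem_preimage, hKVh, Ktower, mem_setOf_eq]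
    push_neg
    constructor
    · rintro ⟨i, hi⟩
      exact ⟨i + 1, by omega, by rwa [Function.iterate_succ_apply]⟩
    · rintro ⟨i, hi1, hi⟩
      refine ⟨i - 1, ?_⟩
      have h : i = (i - 1) + 1 := by omega
      rw [h, Function.iterate_succ_apply] at hi
      exact hi
  have hsub : X \ R ⁻¹' KV ⊆ X ∩ U := by
    rintro z ⟨hzX, hz⟩
    refine ⟨hzX, ?_⟩
    rw [hU, mem_compl_iff, hmemKVh]
    obtain ⟨i, hi1, hi⟩ := (hmemKV z).1 hz
    exact ⟨i, hi1, hclos (subset_closure hi)⟩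
  -- density quantities
  set F : ℂ → ℝ := fun c => sphArea (Vh c \ KV) / sphArea (Vh c) with hF
  set M : ℝ := CJ.sup' hne F with hM
  set Xi : ℝ := min (D ^ 2 * M) (1 - (D ^ 2)⁻¹ * (1 - M)) with hXi
  have hMnn : 0 ≤ M := by
    obtain ⟨c₀, hc₀⟩ := hne
    refine le_trans ?_ (Finset.le_sup' F hc₀)
    have h1 : 0 ≤ sphArea (Vh c₀ \ KV) := by
      rw [sphArea_eq (((hopen c₀ hc₀).2.measurableSet).diff hKVmeas)]
      exact ENNReal.toReal_nonneg
    have h2 : 0 ≤ sphArea (Vh c₀) := by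
      rw [sphArea_eq ((hopen c₀ hc₀).2.measurableSet)]
      exact ENNReal.toReal_nonneg
    exact div_nonneg h1 h2
  have hXinn : 0 ≤ Xi := by
    rw [hXi, le_min_iff]
    constructor
    · positivity
    · have h1 : (D^2)⁻¹ * (1 - M) ≤ 1 := by
        rcases le_or_gt (1 - M) 0 with h | h
        · have : (0:ℝ) < (D^2)⁻¹ := by positivity
          nlinarith
        · have h2 : (D^2)⁻¹ ≤ 1 := by
            rw [inv_le_one_iff₀]
            right; nlinarith
          nlinarith [inv_pos.2 (show (0:ℝ) < D^2 by positivity)]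
      linarith
  -- the per-component estimate
  have hcompbound : ∀ x ∈ U ∩ X, mu0 (connectedComponentIn U x \ R ⁻¹' KV) ≤
      ENNReal.ofReal Xi * mu0 (connectedComponentIn U x) := by
    intro x hx
    set W : Set ℂ := connectedComponentIn U x with hWdef
    have hxW : x ∈ W := mem_connectedComponentIn hx.1
    obtain ⟨hWX, m, c, hcCJ, hbij, hdist⟩ := hcomp x hx.1 ⟨x, hxW, hx.2⟩
    have hWopen : IsOpen W := hUopen.connectedComponentIn
    have hWne : W.Nonempty := ⟨x, hxW⟩
    have hVhcopen : IsOpen (Vh c) := (hopen c hcCJ).2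
    have hVhcne : (Vh c).Nonempty := ⟨c, hnest c hcCJ (subset_closure (hmem c hcCJ))⟩
    -- inclusion via the exclusion lemma
    have hincl : W \ R ⁻¹' KV ⊆ W ∩ (R^[m]) ⁻¹' (Vh c \ KV) := by
      rintro z ⟨hzW, hz⟩
      refine ⟨hzW, ?_⟩
      rw [mem_preimage]
      refine ⟨hbij.mapsTo hzW, ?_⟩
      obtain ⟨i, hi1, hi⟩ := (hmemKV z).1 hz
      have hexc := exclusion R hR hSVopen hSVhopen hSVne hclos
        (fun n hn y hy => (hMarkov n hn y hy).1) x hx.1 hVhcopen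
        (fun y hy => mem_biUnion hcCJ hy) hbij hzW hi1 hi
      obtain ⟨i', hi'⟩ := hexc
      intro hKmem
      exact hKmem i' hi'
    have hbound := per_component (R^[m]) (hR.iterate m) hWopen hWne hVhcopen hVhcne
      hKVmeas hbij hD.le hdist
    -- ρ_c ≤ M
    have hρM : (mu0 (Vh c \ KV)).toReal / (mu0 (Vh c)).toReal ≤ M := by
      have heq : F c = (mu0 (Vh c \ KV)).toReal / (mu0 (Vh c)).toReal := by
        simp only [hF]
        rw [sphArea_eq ((hVhcopen.measurableSet).diff hKVmeas),
          sphArea_eq hVhcopen.measurableSet]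
      rw [← heq, hM]
      exact Finset.le_sup' F hcCJ
    have hmin : min (D ^ 2 * ((mu0 (Vh c \ KV)).toReal / (mu0 (Vh c)).toReal))
        (1 - (D ^ 2)⁻¹ * (1 - (mu0 (Vh c \ KV)).toReal / (mu0 (Vh c)).toReal)) ≤ Xi := by
      rw [hXi]
      apply min_le_min
      · nlinarith [hρM]
      · have : (0:ℝ) < (D^2)⁻¹ := by positivity
        nlinarith [hρM]
    have hreal : (mu0 (W \ R ⁻¹' KV)).toReal ≤ Xi * (mu0 W).toReal := by
      calc (mu0 (W \ R ⁻¹' KV)).toReal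
          ≤ (mu0 (W ∩ (R^[m]) ⁻¹' (Vh c \ KV))).toReal := by
            apply ENNReal.toReal_mono (mu0_lt_top _)
            exact measure_mono hincl
        _ ≤ _ := hbound
        _ ≤ Xi * (mu0 W).toReal :=
            mul_le_mul_of_nonneg_right hmin ENNReal.toReal_nonneg
    calc mu0 (W \ R ⁻¹' KV) = ENNReal.ofReal ((mu0 (W \ R ⁻¹' KV)).toReal) := by
          rw [ENNReal.ofReal_toReal (mu0_lt_top _)]
      _ ≤ ENNReal.ofReal (Xi * (mu0 W).toReal) := ENNReal.ofReal_le_ofReal hreal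
      _ = ENNReal.ofReal Xi * ENNReal.ofReal ((mu0 W).toReal) := ENNReal.ofReal_mul hXinn
      _ = ENNReal.ofReal Xi * mu0 W := by rw [ENNReal.ofReal_toReal (mu0_lt_top _)]
  -- countable family of components
  set 𝒞 : Set (Set ℂ) := {S | ∃ x ∈ U ∩ X, S = connectedComponentIn U x} with h𝒞
  have hdisj𝒞 : 𝒞.PairwiseDisjoint id := by
    rintro S ⟨x₁, hx₁, rfl⟩ T ⟨x₂, hx₂, rfl⟩ hST
    rw [Function.onFun, disjoint_iff_inter_eq_empty]
    by_contra h
    obtain ⟨y, hy1, hy2⟩ := nonempty_iff_ne_empty.2 h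
    exact hST (((connectedComponentIn_eq hy1).trans (connectedComponentIn_eq hy2).symm))
  have hcount : 𝒞.Countable := by
    apply Set.PairwiseDisjoint.countable_of_isOpen hdisj𝒞
    · rintro S ⟨x, hx, rfl⟩
      exact hUopen.connectedComponentIn
    · rintro S ⟨x, hx, rfl⟩
      exact ⟨x, mem_connectedComponentIn hx.1⟩
  have hcover : X \ R ⁻¹' KV ⊆ ⋃ S ∈ 𝒞, (S \ R ⁻¹' KV) := by
    intro z hz
    have hzU : z ∈ X ∩ U := hsub hz
    refine mem_biUnion (show connectedComponentIn U z ∈ 𝒞 from ⟨z, ⟨hzU.2, hzU.1⟩, rfl⟩) ?_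
    exact ⟨mem_connectedComponentIn hzU.2, hz.2⟩
  have hunion_sub : (⋃ S ∈ 𝒞, S) ⊆ X ∩ U := by
    rintro z hz
    obtain ⟨S, hS, hzS⟩ := mem_iUnion₂.1 hz
    obtain ⟨x, hx, rfl⟩ := hS
    obtain ⟨hWX, -⟩ := hcomp x hx.1 ⟨x, mem_connectedComponentIn hx.1, hx.2⟩
    exact ⟨hWX hzS, connectedComponentIn_subset _ _ hzS⟩
  -- the measure chain
  have hchain : mu0 (X \ R ⁻¹' KV) ≤ ENNReal.ofReal Xi * mu0 (X \ R ⁻¹' KVh) := by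
    calc mu0 (X \ R ⁻¹' KV) ≤ mu0 (⋃ S ∈ 𝒞, (S \ R ⁻¹' KV)) := measure_mono hcover
      _ ≤ ∑' S : 𝒞, mu0 ((S : Set ℂ) \ R ⁻¹' KV) := measure_biUnion_le mu0 hcount _
      _ ≤ ∑' S : 𝒞, ENNReal.ofReal Xi * mu0 (S : Set ℂ) := by
          apply ENNReal.tsum_le_tsum
          rintro ⟨S, hS⟩
          obtain ⟨x, hx, rfl⟩ := hS
          exact hcompbound x hx
      _ = ENNReal.ofReal Xi * ∑' S : 𝒞, mu0 (S : Set ℂ) := ENNReal.tsum_mul_left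
      _ = ENNReal.ofReal Xi * mu0 (⋃ S ∈ 𝒞, S) := by
          congr 1
          exact (measure_biUnion hcount hdisj𝒞
            (fun S hS => by
              obtain ⟨x, hx, rfl⟩ := hS
              exact hUopen.connectedComponentIn.measurableSet)).symm
      _ ≤ ENNReal.ofReal Xi * mu0 (X ∩ U) := by
          exact mul_le_mul_right (measure_mono hunion_sub) _
      _ = ENNReal.ofReal Xi * mu0 (X \ R ⁻¹' KVh) := by rw [diff_eq]
  -- back to the reals
  have hXmeasKV : MeasurableSet (X \ R ⁻¹' KV) := hXmeas.diff (hKVclosed.preimage hRc).measurableSet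
  have hXmeasKVh : MeasurableSet (X \ R ⁻¹' KVh) :=
    hXmeas.diff (hKVhclosed.preimage hRc).measurableSet
  have hfinal : sphArea (X \ R ⁻¹' KV) ≤ Xi * sphArea (X \ R ⁻¹' KVh) := by
    rw [sphArea_eq hXmeasKV, sphArea_eq hXmeasKVh]
    have h1 := ENNReal.toReal_mono
      (by exact ENNReal.mul_ne_top ENNReal.ofReal_ne_top (mu0_lt_top _)) hchain
    rwa [ENNReal.toReal_mul, ENNReal.toReal_ofReal hXinn] at h1
  calc sphArea (X \ R ⁻¹' KV) / sphArea X
      ≤ (Xi * sphArea (X \ R ⁻¹' KVh)) / sphArea X := by gcongr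
    _ = sphArea (X \ R ⁻¹' KVh) / sphArea X * Xi := by ring
end
end
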